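/- Let G_dl and G_ul be N×N positive semidefinite Hermitian matrices with G_ul ⪯ G_dl. Then log det(I_N + (I_N + G_dl)^{-1} G_ul) ≤ log det(2·I_N) = N·log 2. -/

import Mathlib

open Matrix
open scoped ComplexOrder

lemma auxPosDefConj {N : ℕ} {M B : Matrix (Fin N) (Fin N) ℂ}
    (hM : M.PosDef) (hB : IsUnit B) : (Bᴴ * M * B).PosDef := by
  refine PosDef.of_dotProduct_mulVec_pos (isHermitian_conjTranspose_mul_mul B hM.1) fun x hx => ?_
  have hBx : B *ᵥ x ≠ 0 := by
    intro h
    exact hx ((mulVec_injective_iff_isUnit.mpr hB) (by simpa using h))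
  simpa only [star_mulVec, dotProduct_mulVec, vecMul_vecMul] using hM.dotProduct_mulVec_pos hBx

lemma auxEigLeTwo {N : ℕ} {P : Matrix (Fin N) (Fin N) ℂ}
    (hP : P.IsHermitian)
    (h2 : ((2 : ℂ) • (1 : Matrix (Fin N) (Fin N) ℂ) - P).PosSemidef)
    (i : Fin N) : hP.eigenvalues i ≤ 2 := by
  set v := ⇑(hP.eigenvectorBasis i) with hv
  have hvv : star v ⬝ᵥ v = 1 := by
    rw [hv, dotProduct_comm, ← EuclideanSpace.inner_eq_star_dotProduct, inner_self_eq_norm_sq_to_K,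
      hP.eigenvectorBasis.orthonormal.1 i]
    norm_num
  have hnn := h2.re_dotProduct_nonneg v
  rw [sub_mulVec, dotProduct_sub, smul_mulVec, one_mulVec, dotProduct_smul,
    hvv] at hnn
  have he := hP.eigenvalues_eq i
  simp only [smul_eq_mul, mul_one, map_sub, RCLike.re_to_complex] at hnn he
  rw [← hv] at he
  norm_num at hnn
  rw [he]
  linarith

open scoped MatrixOrder in
lemma auxSqrt {N : ℕ} {A : Matrix (Fin N) (Fin N) ℂ} (hA : A.PosSemidef) :
    ∃ S : Matrix (Fin N) (Fin N) ℂ, S.PosSemidef ∧ S * S = A :=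
  ⟨CFC.sqrt A, (CFC.sqrt_nonneg A).posSemidef, CFC.sqrt_mul_sqrt_self A hA.nonneg⟩

/-- If `G_ul ⪯ G_dl` are positive semidefinite Hermitian `N × N` matrices, then
`log₂ det(I + (I + G_dl)⁻¹ G_ul) ≤ log₂ det(2·I) = N · log₂ 2`. -/
theorem logdet_inv_mul_le {N : ℕ}
    (Gdl Gul : Matrix (Fin N) (Fin N) ℂ)
    (hGdl : Gdl.PosSemidef) (hGul : Gul.PosSemidef)
    (hle : (Gdl - Gul).PosSemidef) :
    Real.logb 2 (((1 : Matrix (Fin N) (Fin N) ℂ) + (1 + Gdl)⁻¹ * Gul).det.re)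
        ≤ Real.logb 2 (((2 : ℂ) • (1 : Matrix (Fin N) (Fin N) ℂ)).det.re) ∧
      Real.logb 2 (((2 : ℂ) • (1 : Matrix (Fin N) (Fin N) ℂ)).det.re)
        = (N : ℝ) * Real.logb 2 2 := by
  classical
  set A := (1 : Matrix (Fin N) (Fin N) ℂ) + Gdl with hAdef
  have hA : A.PosDef := Matrix.PosDef.one.add_posSemidef hGdl
  have hAGul : (A + Gul).PosDef := hA.add_posSemidef hGul
  have hAmGul : (A - Gul).PosDef := by
    have h : A - Gul = 1 + (Gdl - Gul) := by rw [hAdef]; abel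
    rw [h]; exact Matrix.PosDef.one.add_posSemidef hle
  obtain ⟨S, hS, hSS⟩ := auxSqrt hA.posSemidef
  have hSunit : IsUnit S := by
    apply (isUnit_iff_isUnit_det _).2
    have : IsUnit (det S * det S) := by rw [← det_mul, hSS]; exact hA.det_pos.ne'.isUnit
    exact isUnit_of_mul_isUnit_left this
  have hSinvUnit : IsUnit S⁻¹ := Matrix.isUnit_nonsing_inv_iff.2 hSunit
  have hSinvH : (S⁻¹)ᴴ = S⁻¹ := hS.inv.1
  letI := hSunit.invertible
  letI := hA.isUnit.invertible
  have hSAS : S⁻¹ * A * S⁻¹ = 1 := by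
    rw [← hSS, ← Matrix.mul_assoc, Matrix.inv_mul_of_invertible, Matrix.one_mul,
      Matrix.mul_inv_of_invertible]
  set P := S⁻¹ * (A + Gul) * S⁻¹ with hPdef
  have hP : P.PosDef := by
    have := auxPosDefConj hAGul hSinvUnit
    rwa [hSinvH] at this
  have hdetEq : ((1 : Matrix (Fin N) (Fin N) ℂ) + (1 + Gdl)⁻¹ * Gul).det = P.det := by
    have hT : (1 : Matrix (Fin N) (Fin N) ℂ) + (1 + Gdl)⁻¹ * Gul = A⁻¹ * (A + Gul) := by
      rw [Matrix.mul_add, Matrix.inv_mul_of_invertible, hAdef]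
    rw [hT, hPdef]
    have hAinv : A⁻¹ = S⁻¹ * S⁻¹ := by rw [← hSS, Matrix.mul_inv_rev]
    rw [hAinv]
    simp only [det_mul]
    ring
  have h2P : ((2 : ℂ) • (1 : Matrix (Fin N) (Fin N) ℂ) - P).PosSemidef := by
    have hid : (2 : ℂ) • (1 : Matrix (Fin N) (Fin N) ℂ) - P = S⁻¹ * (A - Gul) * S⁻¹ := by
      rw [hPdef, Matrix.mul_sub, Matrix.sub_mul, Matrix.mul_add, Matrix.add_mul, hSAS]
      have : (2 : ℂ) • (1 : Matrix (Fin N) (Fin N) ℂ) = 1 + 1 := by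
        rw [two_smul]
      rw [this]; abel
    rw [hid]
    have h3 := hAmGul.posSemidef.conjTranspose_mul_mul_same S⁻¹
    rwa [hSinvH] at h3
  -- determinant of P
  have hdetP : P.det = ((∏ i, hP.1.eigenvalues i : ℝ) : ℂ) := by
    rw [hP.1.det_eq_prod_eigenvalues]; push_cast; rfl
  have hre : P.det.re = ∏ i, hP.1.eigenvalues i := by rw [hdetP, Complex.ofReal_re]
  have hpos : 0 < ∏ i, hP.1.eigenvalues i :=
    Finset.prod_pos fun i _ => hP.eigenvalues_pos i
  have hub : (∏ i, hP.1.eigenvalues i) ≤ 2 ^ N := by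
    calc (∏ i, hP.1.eigenvalues i) ≤ ∏ _i : Fin N, (2:ℝ) :=
          Finset.prod_le_prod (fun i _ => (hP.eigenvalues_pos i).le)
            (fun i _ => auxEigLeTwo hP.1 h2P i)
      _ = 2 ^ N := by simp
  have hRHS : ((2 : ℂ) • (1 : Matrix (Fin N) (Fin N) ℂ)).det.re = (2 : ℝ) ^ N := by
    rw [det_smul, det_one, mul_one, Fintype.card_fin]
    have h4 : (2 : ℂ) ^ N = (((2 : ℝ) ^ N : ℝ) : ℂ) := by push_cast; ring
    rw [h4, Complex.ofReal_re]
  constructor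
  · rw [hdetEq, hre, hRHS]
    exact Real.logb_le_logb_of_le (by norm_num) hpos hub
  · rw [hRHS, Real.logb_pow]
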